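/- Let V be a ℚ-vector space with an SL₂(ℤ)-action such that (u-1)⁵ = 0 and w² acts as -1, and let x = log u. Then x⁴wx⁴wx⁴ = 0 in End(V). -/

import Mathlib

open Matrix

def u : Matrix.SpecialLinearGroup (Fin 2) ℤ :=
  ⟨!![1, 1; 0, 1], by simp [Matrix.det_fin_two_of]⟩

def w : Matrix.SpecialLinearGroup (Fin 2) ℤ :=
  ⟨!![0, 1; -1, 0], by simp [Matrix.det_fin_two_of]⟩

/-- The lower unipotent `l = [[1,0],[1,1]]`. -/
def lpos : Matrix.SpecialLinearGroup (Fin 2) ℤ :=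
  ⟨!![1, 0; 1, 1], by simp [Matrix.det_fin_two_of]⟩

/-- `l⁻¹ = [[1,0],[-1,1]]`. -/
def lneg : Matrix.SpecialLinearGroup (Fin 2) ℤ :=
  ⟨!![1, 0; -1, 1], by simp [Matrix.det_fin_two_of]⟩

/-- `u⁻¹ = [[1,-1],[0,1]]`. -/
def uneg : Matrix.SpecialLinearGroup (Fin 2) ℤ :=
  ⟨!![1, -1; 0, 1], by simp [Matrix.det_fin_two_of]⟩

lemma g_wu : w * u = lneg * w := by
  apply Subtype.ext
  simp only [Matrix.SpecialLinearGroup.coe_mul]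
  simp [u, w, lpos, lneg, uneg, Matrix.SpecialLinearGroup.coe_mul, Matrix.one_fin_two]

lemma g_uuinv : u * uneg = 1 := by
  apply Subtype.ext
  simp only [Matrix.SpecialLinearGroup.coe_mul]
  simp [u, w, lpos, lneg, uneg, Matrix.SpecialLinearGroup.coe_mul, Matrix.one_fin_two]

lemma g_uinvu : uneg * u = 1 := by
  apply Subtype.ext
  simp only [Matrix.SpecialLinearGroup.coe_mul]
  simp [u, w, lpos, lneg, uneg, Matrix.SpecialLinearGroup.coe_mul, Matrix.one_fin_two]

lemma g_lnlp : lneg * lpos = 1 := by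
  apply Subtype.ext
  simp only [Matrix.SpecialLinearGroup.coe_mul]
  simp [u, w, lpos, lneg, uneg, Matrix.SpecialLinearGroup.coe_mul, Matrix.one_fin_two]

lemma g_S1 : lneg = w * w * uneg * uneg * lpos * uneg * uneg := by
  apply Subtype.ext
  simp only [Matrix.SpecialLinearGroup.coe_mul]
  simp [u, w, lpos, lneg, uneg, Matrix.SpecialLinearGroup.coe_mul, Matrix.one_fin_two]

lemma g_S2 : lneg * lneg = w * w * uneg * lpos * lpos * uneg := by
  apply Subtype.ext
  simp only [Matrix.SpecialLinearGroup.coe_mul]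
  simp [u, w, lpos, lneg, uneg, Matrix.SpecialLinearGroup.coe_mul, Matrix.one_fin_two]

/-- If `(u-1)⁵ = 0` and `w²` acts as `-1`, then with `x = log u` one has
`x⁴wx⁴wx⁴ = 0` in `End(V)`. -/
theorem quintic_minus_x4wx4wx4
    (V : Type*) [AddCommGroup V] [Module ℚ V]
    (ρ : Representation ℚ (Matrix.SpecialLinearGroup (Fin 2) ℤ) V)
    (hquint : (ρ u - 1) ^ 5 = 0)
    (hi : ρ (w ^ 2) = -1)
    (x : Module.End ℚ V)
    (hx : x = ∑ k ∈ Finset.Icc (1 : ℕ) 4, ((-1 : ℚ) ^ (k + 1) * (k : ℚ)⁻¹) • (ρ u - 1) ^ k) :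
    x ^ 4 * ρ w * x ^ 4 * ρ w * x ^ 4 = 0 := by
  set N : Module.End ℚ V := ρ u - 1 with hN
  set B : Module.End ℚ V := ρ w with hB
  set L : Module.End ℚ V := ρ lneg with hL
  set L' : Module.End ℚ V := ρ lpos with hL'
  set Ai : Module.End ℚ V := ρ uneg with hAi
  -- basic power vanishing
  have h5 : N ^ 5 = 0 := hquint
  have h6 : N ^ 6 = 0 := by rw [show (6 : ℕ) = 5 + 1 from rfl, pow_add, h5, zero_mul]
  have h7 : N ^ 7 = 0 := by rw [show (7 : ℕ) = 5 + 2 from rfl, pow_add, h5, zero_mul]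
  have h8 : N ^ 8 = 0 := by rw [show (8 : ℕ) = 5 + 3 from rfl, pow_add, h5, zero_mul]
  have h44 : N ^ 4 * N ^ 4 = 0 := by rw [← pow_add]; norm_num [h8]
  -- B * B = -1
  have hB2 : B * B = -1 := by rw [hB, ← _root_.map_mul, ← pow_two, hi]
  -- x as explicit polynomial in N
  have hx' : x = N - (2⁻¹ : ℚ) • N ^ 2 + (3⁻¹ : ℚ) • N ^ 3 - (4⁻¹ : ℚ) • N ^ 4 := by
    rw [hx, show Finset.Icc (1 : ℕ) 4 = {1, 2, 3, 4} by decide,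
      Finset.sum_insert (by decide), Finset.sum_insert (by decide),
      Finset.sum_insert (by decide), Finset.sum_singleton]
    norm_num
    module
  -- products x * N^k
  have xN4 : x * N ^ 4 = 0 := by
    rw [hx']
    simp only [sub_mul, add_mul, smul_mul_assoc, ← pow_add, ← pow_succ, ← pow_succ']
    norm_num [h5, h6, h7, h8]
  have xN3 : x * N ^ 3 = N ^ 4 := by
    rw [hx']
    simp only [sub_mul, add_mul, smul_mul_assoc, ← pow_add, ← pow_succ, ← pow_succ']
    norm_num [h5, h6, h7]
  have xN2 : x * N ^ 2 = N ^ 3 - (2⁻¹ : ℚ) • N ^ 4 := by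
    rw [hx']
    simp only [sub_mul, add_mul, smul_mul_assoc, ← pow_add, ← pow_succ, ← pow_succ']
    norm_num [h5, h6]
  have xN1 : x * N = N ^ 2 - (2⁻¹ : ℚ) • N ^ 3 + (3⁻¹ : ℚ) • N ^ 4 := by
    rw [hx']
    simp only [sub_mul, add_mul, smul_mul_assoc, ← pow_add, ← pow_succ, ← pow_succ', ← pow_two]
    norm_num [h5]
  have hx2 : x ^ 2 = N ^ 2 - N ^ 3 + (11 / 12 : ℚ) • N ^ 4 := by
    rw [pow_two]
    nth_rewrite 2 [hx']
    simp only [mul_sub, mul_add, mul_smul_comm]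
    rw [xN1, xN2, xN3, xN4]
    module
  have hx3 : x ^ 3 = N ^ 3 - (3 / 2 : ℚ) • N ^ 4 := by
    rw [show (3 : ℕ) = 2 + 1 from rfl, pow_succ', hx2]
    simp only [mul_sub, mul_add, mul_smul_comm]
    rw [xN2, xN3, xN4]
    module
  have hx4 : x ^ 4 = N ^ 4 := by
    rw [show (4 : ℕ) = 3 + 1 from rfl, pow_succ', hx3]
    simp only [mul_sub, mul_smul_comm]
    rw [xN3, xN4]
    module
  -- absorption lemmas
  have hA1 : ρ u = N + 1 := by rw [hN]; abel
  have abs_rA : N ^ 4 * ρ u = N ^ 4 := by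
    rw [hA1, mul_add, mul_one, ← pow_succ, h5, zero_add]
  have abs_lA : ρ u * N ^ 4 = N ^ 4 := by
    rw [hA1, add_mul, one_mul, ← pow_succ', h5, zero_add]
  have abs_rAi : N ^ 4 * Ai = N ^ 4 := by
    calc N ^ 4 * Ai = (N ^ 4 * ρ u) * Ai := by rw [abs_rA]
    _ = N ^ 4 * (ρ u * Ai) := by rw [mul_assoc]
    _ = N ^ 4 := by rw [hAi, ← _root_.map_mul, g_uuinv, _root_.map_one, mul_one]
  have abs_lAi : Ai * N ^ 4 = N ^ 4 := by
    calc Ai * N ^ 4 = Ai * (ρ u * N ^ 4) := by rw [abs_lA]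
    _ = (Ai * ρ u) * N ^ 4 := by rw [← mul_assoc]
    _ = N ^ 4 := by rw [hAi, ← _root_.map_mul, g_uinvu, _root_.map_one, one_mul]
  have absR : ∀ Z : Module.End ℚ V, Z * Ai * N ^ 4 = Z * N ^ 4 := fun Z => by
    rw [mul_assoc, abs_lAi]
  -- conjugation by B
  have hBN1 : B * N = (L - 1) * B := by
    rw [hN, hB, hL, mul_sub, mul_one, sub_mul, one_mul, ← _root_.map_mul, ← _root_.map_mul, g_wu]
  have hconj : ∀ k : ℕ, B * N ^ k = (L - 1) ^ k * B := by
    intro k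
    induction k with
    | zero => simp
    | succ n ih =>
      rw [pow_succ, pow_succ, ← mul_assoc, ih, mul_assoc, hBN1, ← mul_assoc]
  have hM5 : (L - 1) ^ 5 = 0 := by
    have h5b : (L - 1) ^ 5 * B = 0 := by rw [← hconj 5, h5, mul_zero]
    have h2 : (L - 1) ^ 5 * (B * B) = 0 := by rw [← mul_assoc, h5b, zero_mul]
    rw [hB2, mul_neg_one] at h2
    exact neg_eq_zero.mp h2
  -- L, L' cancellation
  have hLL' : L * L' = 1 := by rw [hL, hL', ← _root_.map_mul, g_lnlp, _root_.map_one]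
  have hc1 : L * L' ^ 2 = L' := by rw [pow_two, ← mul_assoc, hLL', one_mul]
  have hc2 : L ^ 2 * L' ^ 2 = 1 := by
    rw [pow_two, pow_two, mul_assoc, ← mul_assoc L L' L', hLL', one_mul, hLL']
  have hc3 : L ^ 3 * L' ^ 2 = L := by
    rw [show (3 : ℕ) = 2 + 1 from rfl, pow_succ', mul_assoc, hc2, mul_one]
  have hc4 : L ^ 4 * L' ^ 2 = L ^ 2 := by
    rw [show (4 : ℕ) = 2 + 2 from rfl, pow_add, mul_assoc, hc2, mul_one]
  -- the balanced Laurent form of (L-1)^4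
  have key : (L - 1) ^ 4 * L ^ 2 = L ^ 4 - 4 * L ^ 3 + 6 * L ^ 2 - 4 * L + 1 := by
    have e : (L - 1) ^ 4 * L ^ 2
        = L ^ 4 - 4 * L ^ 3 + 6 * L ^ 2 - 4 * L + 1 + (L + 1) * (L - 1) ^ 5 := by
      noncomm_ring
    rw [hM5, mul_zero, add_zero] at e
    exact e
  have hM4 : (L - 1) ^ 4 = L ^ 2 + L' ^ 2 - 4 * (L + L') + 6 := by
    calc (L - 1) ^ 4 = (L - 1) ^ 4 * (L ^ 2 * L' ^ 2) := by rw [hc2, mul_one]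
    _ = ((L - 1) ^ 4 * L ^ 2) * L' ^ 2 := by rw [← mul_assoc]
    _ = (L ^ 4 - 4 * L ^ 3 + 6 * L ^ 2 - 4 * L + 1) * L' ^ 2 := by rw [key]
    _ = (L ^ 4 * L' ^ 2) - 4 * (L ^ 3 * L' ^ 2) + 6 * (L ^ 2 * L' ^ 2)
          - 4 * (L * L' ^ 2) + L' ^ 2 := by noncomm_ring
    _ = L ^ 2 + L' ^ 2 - 4 * (L + L') + 6 := by
        rw [hc4, hc3, hc2, hc1, mul_one]; noncomm_ring
  -- the two sandwich identities
  have hL1 : L = -(Ai * Ai * L' * Ai * Ai) := by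
    rw [hL, g_S1]
    simp only [_root_.map_mul]
    rw [← hB, ← hAi, ← hL', hB2]
    simp only [neg_one_mul, neg_mul, one_mul]
  have S1raw : N ^ 4 * L * N ^ 4 = -(N ^ 4 * L' * N ^ 4) := by
    calc N ^ 4 * L * N ^ 4 = N ^ 4 * (-(Ai * Ai * L' * Ai * Ai)) * N ^ 4 := by rw [hL1]
    _ = -(N ^ 4 * Ai * Ai * L' * Ai * Ai * N ^ 4) := by
        simp only [mul_neg, neg_mul, ← mul_assoc]
    _ = -(N ^ 4 * L' * N ^ 4) := by rw [abs_rAi, abs_rAi, absR, absR]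
  have S1 : N ^ 4 * (L + L') * N ^ 4 = 0 := by
    have e : N ^ 4 * (L + L') * N ^ 4 = N ^ 4 * L * N ^ 4 + N ^ 4 * L' * N ^ 4 := by
      noncomm_ring
    rw [e, S1raw, neg_add_cancel]
  have hL2 : L * L = -(Ai * L' * L' * Ai) := by
    rw [hL, ← _root_.map_mul, g_S2]
    simp only [_root_.map_mul]
    rw [← hB, ← hAi, ← hL', hB2]
    simp only [neg_one_mul, neg_mul, one_mul]
  have S2raw : N ^ 4 * (L * L) * N ^ 4 = -(N ^ 4 * (L' * L') * N ^ 4) := by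
    calc N ^ 4 * (L * L) * N ^ 4 = N ^ 4 * (-(Ai * L' * L' * Ai)) * N ^ 4 := by rw [hL2]
    _ = -(N ^ 4 * Ai * L' * L' * Ai * N ^ 4) := by
        simp only [mul_neg, neg_mul, ← mul_assoc]
    _ = -(N ^ 4 * (L' * L') * N ^ 4) := by rw [abs_rAi, absR]; noncomm_ring
  have S2 : N ^ 4 * (L ^ 2 + L' ^ 2) * N ^ 4 = 0 := by
    have e : N ^ 4 * (L ^ 2 + L' ^ 2) * N ^ 4
        = N ^ 4 * (L * L) * N ^ 4 + N ^ 4 * (L' * L') * N ^ 4 := by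
      noncomm_ring
    rw [e, S2raw, neg_add_cancel]
  -- final assembly
  have step1 : B * N ^ 4 * B = -((L - 1) ^ 4) := by
    rw [hconj 4, mul_assoc, hB2, mul_neg_one]
  calc x ^ 4 * B * x ^ 4 * B * x ^ 4 = N ^ 4 * B * N ^ 4 * B * N ^ 4 := by rw [hx4]
  _ = N ^ 4 * (B * N ^ 4 * B) * N ^ 4 := by noncomm_ring
  _ = N ^ 4 * (-((L - 1) ^ 4)) * N ^ 4 := by rw [step1]
  _ = -(N ^ 4 * (L ^ 2 + L' ^ 2 - 4 * (L + L') + 6) * N ^ 4) := by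
      rw [hM4]; noncomm_ring
  _ = -(N ^ 4 * (L ^ 2 + L' ^ 2) * N ^ 4 - 4 * (N ^ 4 * (L + L') * N ^ 4)
        + 6 * (N ^ 4 * N ^ 4)) := by noncomm_ring
  _ = 0 := by rw [S1, S2, h44]; norm_num
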